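/- The polynomial $f(x)=x^6+8x^5+24x^4+36x^3+24x^2+8x+1$ is symmetric with center $3$, is ultra log-concave of order $6$ with no internal zeros, and its $\gamma$-polynomial is $\gamma_f(x)=2x^3+x^2+2x+1$, which has nonnegative coefficients but is not unimodal (hence not log-concave). -/

import Mathlib

open Polynomial

/-- Ultra log-concavity of order `m`. -/
def UltraLogConcave (m : ℕ) (a : Polynomial ℝ) : Prop :=
  ∀ j, 1 ≤ j → j ≤ m - 1 →
    (a.coeff (j - 1) / (m.choose (j - 1) : ℝ)) *
      (a.coeff (j + 1) / (m.choose (j + 1) : ℝ)) ≤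
    (a.coeff j / (m.choose j : ℝ)) ^ 2

/-- No internal zeros. -/
def NoInternalZeros (a : Polynomial ℝ) : Prop :=
  ¬ ∃ i j k, i < j ∧ j < k ∧ a.coeff j = 0 ∧ a.coeff i * a.coeff k ≠ 0

/-- Unimodality of the coefficient sequence. -/
def Unimodal (a : Polynomial ℝ) : Prop :=
  ∃ k, (∀ i < k, a.coeff i ≤ a.coeff (i + 1)) ∧ ∀ i, k ≤ i → a.coeff (i + 1) ≤ a.coeff i

/-- Log-concavity of the coefficient sequence. -/
def LogConcaveCoeffs (a : Polynomial ℝ) : Prop :=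
  ∀ j, 1 ≤ j → a.coeff (j - 1) * a.coeff (j + 1) ≤ a.coeff j ^ 2

/-- The polynomial `f(x) = x^6+8x^5+24x^4+36x^3+24x^2+8x+1` is symmetric with
center `3`, ultra log-concave of order `6` with no internal zeros, and its
`γ`-polynomial is `γ_f(x) = 2x^3+x^2+2x+1`, which has nonnegative coefficients
but is not unimodal (hence not log-concave). -/
theorem example_ulc_but_gamma_not_unimodal :
    ∀ f g : Polynomial ℝ,
      f = Polynomial.X ^ 6 + 8 * Polynomial.X ^ 5 + 24 * Polynomial.X ^ 4 +
        36 * Polynomial.X ^ 3 + 24 * Polynomial.X ^ 2 + 8 * Polynomial.X + 1 →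
      g = 2 * Polynomial.X ^ 3 + Polynomial.X ^ 2 + 2 * Polynomial.X + 1 →
      (∀ i ≤ 6, f.coeff i = f.coeff (6 - i)) ∧
      UltraLogConcave 6 f ∧ NoInternalZeros f ∧
      f = ∑ i ∈ Finset.range 4,
        Polynomial.C (g.coeff i) * Polynomial.X ^ i * (1 + Polynomial.X) ^ (6 - 2 * i) ∧
      (∀ j, 0 ≤ g.coeff j) ∧ ¬ Unimodal g ∧ ¬ LogConcaveCoeffs g := by
  intro f g hf hg
  subst hf hg
  have hfdeg : (X ^ 6 + 8 * X ^ 5 + 24 * X ^ 4 + 36 * X ^ 3 + 24 * X ^ 2 + 8 * X + 1 :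
      Polynomial ℝ).natDegree ≤ 6 := by compute_degree
  have hgdeg : (2 * X ^ 3 + X ^ 2 + 2 * X + 1 : Polynomial ℝ).natDegree ≤ 3 := by
    compute_degree
  refine ⟨?_, ?_, ?_, ?_, ?_, ?_, ?_⟩
  · intro i hi
    interval_cases i <;> norm_num [coeff_ofNat_mul, coeff_one, coeff_X]
  · intro j h1 h2
    interval_cases j <;> norm_num [coeff_ofNat_mul, coeff_one, coeff_X, Nat.choose]
  · rintro ⟨i, j, k, hij, hjk, hj0, hne⟩
    by_cases hj : j ≤ 6
    · apply absurd hj0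
      interval_cases j <;> norm_num [coeff_ofNat_mul, coeff_one, coeff_X]
    · have hk : 6 < k := by omega
      have : (X ^ 6 + 8 * X ^ 5 + 24 * X ^ 4 + 36 * X ^ 3 + 24 * X ^ 2 + 8 * X + 1 :
          Polynomial ℝ).coeff k = 0 :=
        coeff_eq_zero_of_natDegree_lt (lt_of_le_of_lt hfdeg hk)
      simp [this] at hne
  · rw [Finset.sum_range_succ, Finset.sum_range_succ, Finset.sum_range_succ,
      Finset.sum_range_one]
    norm_num [coeff_ofNat_mul, coeff_one, coeff_X, map_ofNat]
    ring
  · intro j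
    by_cases hj : j ≤ 3
    · interval_cases j <;> norm_num [coeff_ofNat_mul, coeff_one, coeff_X]
    · have : (2 * X ^ 3 + X ^ 2 + 2 * X + 1 : Polynomial ℝ).coeff j = 0 :=
        coeff_eq_zero_of_natDegree_lt (lt_of_le_of_lt hgdeg (by omega))
      rw [this]
  · rintro ⟨k, hinc, hdec⟩
    rcases lt_or_ge 1 k with hk | hk
    · have := hinc 1 hk
      norm_num [coeff_ofNat_mul, coeff_one, coeff_X] at this
    · have := hdec 2 (by omega)
      norm_num [coeff_ofNat_mul, coeff_one, coeff_X] at this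
  · intro h
    have := h 2 (by norm_num)
    norm_num [coeff_ofNat_mul, coeff_one, coeff_X] at this
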